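/- Let K be a group, H a subgroup, and (G_i)_{i∈I} a finite family of subgroups such that [H : H ∩ G_i] is infinite or equal to 1 for every i. If a coset c + H is covered by a finite union ⋃_{i∈I}(c_i + G_i) of cosets of the G_i, then c + H ⊆ c_i + G_i for at least one i. -/

import Mathlib

open scoped Pointwise

/-- Corollary of Neumann's Lemma under the condition that each index `[H : H ∩ G_i]`
is `1` or infinite (index `0` means infinite): if a coset `c + H` is covered by a
finite union of cosets `c_i + G_i`, then it is contained in one of them. -/
theorem stmt11 {K : Type*} [AddGroup K] {ι : Type*} (I : Finset ι)
    (H : AddSubgroup K) (G : ι → AddSubgroup K) (c : K) (cc : ι → K)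
    (hind : ∀ i ∈ I, (G i).relIndex H = 1 ∨ (G i).relIndex H = 0)
    (hcov : (c +ᵥ (H : Set K)) ⊆ ⋃ i ∈ I, (cc i +ᵥ ((G i : AddSubgroup K) : Set K))) :
    ∃ i ∈ I, (c +ᵥ (H : Set K)) ⊆ cc i +ᵥ ((G i : AddSubgroup K) : Set K) := by
  classical
  -- restrict to indices whose cosets meet `c + H`
  set S : Finset ι := I.filter
    (fun i => ∃ h ∈ H, c + h ∈ cc i +ᵥ ((G i : AddSubgroup K) : Set K)) with hS
  have hmemS : ∀ i ∈ S, ∃ h ∈ H, c + h ∈ cc i +ᵥ ((G i : AddSubgroup K) : Set K) :=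
    fun i hi => (Finset.mem_filter.mp hi).2
  choose! h hhH hh using hmemS
  set f : ι → H := fun i => if hi : i ∈ S then ⟨h i, hhH i hi⟩ else 0 with hf
  -- pull the cover back into the group `H`
  have hcovH : ⋃ i ∈ S, (f i +ᵥ (((G i).addSubgroupOf H : AddSubgroup H) : Set H))
      = Set.univ := by
    refine Set.eq_univ_iff_forall.mpr fun x => ?_
    have hx : c + (x : K) ∈ ⋃ i ∈ I, (cc i +ᵥ ((G i : AddSubgroup K) : Set K)) :=
      hcov ⟨(x : K), x.2, rfl⟩
    simp only [Set.mem_iUnion] at hx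
    obtain ⟨i, hiI, hxi⟩ := hx
    have hiS : i ∈ S := Finset.mem_filter.mpr ⟨hiI, ⟨x, x.2, hxi⟩⟩
    refine Set.mem_iUnion₂.mpr ⟨i, hiS, ?_⟩
    -- both `c + h i` and `c + x` lie in `cc i + G i`
    obtain ⟨g₁, hg₁, he₁⟩ := hh i hiS
    obtain ⟨g₂, hg₂, he₂⟩ := hxi
    have hdiff : -(h i) + (x : K) ∈ G i := by
      have key : -(h i) + (x : K) = -g₁ + g₂ := by
        have e1 : c + h i = cc i + g₁ := he₁.symm
        have e2 : c + (x : K) = cc i + g₂ := he₂.symm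
        have := congrArg₂ (fun a b => -a + b) e1 e2
        simpa [neg_add, add_assoc] using this
      rw [key]
      exact (G i).add_mem ((G i).neg_mem hg₁) hg₂
    refine Set.mem_vadd_set.mpr ⟨⟨-(h i) + (x : K), H.add_mem (H.neg_mem (hhH i hiS)) x.2⟩,
      hdiff, ?_⟩
    ext
    simp [hf, hiS, add_assoc]
  -- one of the subgroups has finite index in `H`
  obtain ⟨i, hiS, hfin⟩ := AddSubgroup.exists_finiteIndex_of_leftCoset_cover hcovH
  have hiI : i ∈ I := (Finset.mem_filter.mp hiS).1
  have hrel : (G i).relIndex H = 1 := by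
    rcases hind i hiI with h1 | h0
    · exact h1
    · exact absurd h0 hfin.index_ne_zero
  have hle : H ≤ G i := AddSubgroup.relIndex_eq_one.mp hrel
  refine ⟨i, hiI, ?_⟩
  obtain ⟨g₁, hg₁, he₁⟩ := hh i hiS
  rintro _ ⟨y, hy, rfl⟩
  refine Set.mem_vadd_set.mpr ⟨g₁ + (-(h i) + y), ?_, ?_⟩
  · exact (G i).add_mem hg₁ ((G i).add_mem ((G i).neg_mem (hle (hhH i hiS))) (hle hy))
  · have e1 : cc i + g₁ = c + h i := he₁
    calc cc i + (g₁ + (-(h i) + y)) = (cc i + g₁) + (-(h i) + y) := by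
          rw [add_assoc]
      _ = (c + h i) + (-(h i) + y) := by rw [e1]
      _ = c + y := by simp [add_assoc]
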